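/- For every a > 0, d ≥ 1, k ≥ 1 integer, and x, z ∈ (−d, d): ∫_{−∞}^{−d} e^{−a(x−y)}(x−y)^{−1/2} · e^{−a(2kd+z−y)}(2kd+z−y)^{−1/2} dy ≤ √π e^{−a(2(k+1)d + x + z)} / √(4ad). -/

import Mathlib

open Real MeasureTheory

/-- tail convolution estimate I_{k,1}. -/
theorem stmt13 (a d : ℝ) (k : ℕ) (ha : 0 < a) (hd : 1 ≤ d) (hk : 1 ≤ k)
    (x z : ℝ) (hx : x ∈ Set.Ioo (-d) d) (hz : z ∈ Set.Ioo (-d) d) :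
    ∫ y in Set.Iic (-d),
        Real.exp (-a * (x - y)) / Real.sqrt (x - y) *
          (Real.exp (-a * (2 * (k : ℝ) * d + z - y)) /
            Real.sqrt (2 * (k : ℝ) * d + z - y)) ≤
      Real.sqrt π * Real.exp (-a * (2 * ((k : ℝ) + 1) * d + x + z)) /
        Real.sqrt (4 * a * d) := by
  obtain ⟨hx1, hx2⟩ := hx
  obtain ⟨hz1, hz2⟩ := hz
  have hd0 : (0:ℝ) < d := by linarith
  have hk1 : (1:ℝ) ≤ (k:ℝ) := by exact_mod_cast hk
  set F : ℝ → ℝ := fun t => t ^ ((1/2:ℝ) - 1) * Real.exp (-(2*a*t)) with hFdef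
  set C : ℝ := Real.exp (-a*(2*((k:ℝ)+1)*d + x + z)) / Real.sqrt (2*d) with hCdef
  -- integrability of F on Ioi 0
  have hFi : IntegrableOn F (Set.Ioi (0:ℝ)) := by
    have h := integrableOn_rpow_mul_exp_neg_mul_rpow (p := 1) (s := -(1/2)) (b := 2*a)
      (by norm_num) (by norm_num) (by linarith)
    have heq : F = fun x : ℝ => x ^ (-(1/2):ℝ) * Real.exp (-(2*a) * x ^ (1:ℝ)) := by
      funext t
      rw [hFdef]
      norm_num [Real.rpow_one, neg_mul, mul_assoc]
    rw [heq]
    exact h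
  -- value of the model integral
  have hFval : ∫ t in Set.Ioi (0:ℝ), F t = (1/(2*a)) ^ (1/2:ℝ) * Real.Gamma (1/2) := by
    rw [hFdef]
    exact integral_rpow_mul_exp_neg_mul_Ioi (by norm_num) (by linarith)
  -- the substitution map
  set e : ℝ → ℝ := fun t => -d - t with hedef
  have hme : Measurable e := by fun_prop
  have he : MeasurableEmbedding e := by
    have h := ((Homeomorph.neg ℝ).trans
      (Homeomorph.addRight (-d))).isClosedEmbedding.measurableEmbedding
    have heq : e = ⇑((Homeomorph.neg ℝ).trans (Homeomorph.addRight (-d))) := by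
      funext t
      simp [hedef, Homeomorph.trans_apply]
      ring
    rw [heq]; exact h
  have hmap : Measure.map e volume = volume := by
    have heq : e = (fun u : ℝ => u + (-d)) ∘ fun t : ℝ => -t := by
      funext t; simp [hedef]; ring
    rw [heq, ← Measure.map_map (measurable_add_const _) measurable_neg,
      Measure.map_neg_eq_self, map_add_right_eq_self]
  have hpre : e ⁻¹' (Set.Iio (-d)) = Set.Ioi (0:ℝ) := by
    ext t
    simp only [Set.mem_preimage, Set.mem_Iio, Set.mem_Ioi, hedef]
    constructor <;> intro <;> linarith
  have hrestrict : volume.restrict (Set.Iio (-d))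
      = Measure.map e (volume.restrict (Set.Ioi (0:ℝ))) := by
    have h := Measure.restrict_map (μ := volume) hme (measurableSet_Iio (a := -d))
    rw [hmap, hpre] at h
    exact h
  -- the bounding function
  set g : ℝ → ℝ := fun y => C * F (e y) with hgdef
  have hcomp : (fun t => g (e t)) = fun t => C * F t := by
    funext t
    have het : e (e t) = t := by simp [hedef]
    rw [hgdef]
    simp only []
    rw [het]
  -- integrability of g on Iio (-d)
  have hgI : IntegrableOn g (Set.Iio (-d)) := by
    rw [IntegrableOn, hrestrict, he.integrable_map_iff]
    have : (g ∘ e) = fun t => C * F t := hcomp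
    rw [this]
    exact hFi.const_mul C
  -- value of the integral of g
  have hgval : ∫ y in Set.Iio (-d), g y = C * ((1/(2*a)) ^ (1/2:ℝ) * Real.Gamma (1/2)) := by
    rw [hrestrict, he.integral_map]
    calc ∫ t in Set.Ioi (0:ℝ), g (e t) = ∫ t in Set.Ioi (0:ℝ), C * F t := by rw [hcomp]
    _ = C * ∫ t in Set.Ioi (0:ℝ), F t := integral_const_mul _ _
    _ = _ := by rw [hFval]
  -- pointwise bound on Iio (-d)
  have hbound : ∀ y ∈ Set.Iio (-d),
      Real.exp (-a * (x - y)) / Real.sqrt (x - y) *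
        (Real.exp (-a * (2 * (k : ℝ) * d + z - y)) /
          Real.sqrt (2 * (k : ℝ) * d + z - y)) ≤ g y := by
    intro y hy
    rw [Set.mem_Iio] at hy
    have h1 : 0 < -d - y := by linarith
    have h3 : 0 < x - y := by linarith
    have h2 : (0:ℝ) < 2 * (k:ℝ) * d + z - y := by nlinarith
    have hds : (2:ℝ)*d ≤ 2 * (k:ℝ) * d + z - y := by nlinarith
    have hprod : Real.sqrt (-d-y) * Real.sqrt (2*d)
        ≤ Real.sqrt (x-y) * Real.sqrt (2 * (k:ℝ) * d + z - y) :=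
      mul_le_mul (Real.sqrt_le_sqrt (by linarith)) (Real.sqrt_le_sqrt hds)
        (Real.sqrt_nonneg _) (Real.sqrt_nonneg _)
    have hpos : 0 < Real.sqrt (-d-y) * Real.sqrt (2*d) :=
      mul_pos (Real.sqrt_pos.mpr h1) (Real.sqrt_pos.mpr (by linarith))
    have hgy : g y = Real.exp (-a*(2*((k:ℝ)+1)*d + x + z) + -(2*a*(-d-y)))
        / (Real.sqrt (-d-y) * Real.sqrt (2*d)) := by
      rw [hgdef]
      simp only []
      rw [hedef]
      simp only []
      rw [hFdef]
      simp only []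
      rw [hCdef, show ((1:ℝ)/2 - 1) = -(1/2) from by norm_num, Real.rpow_neg h1.le,
        ← Real.sqrt_eq_rpow, Real.exp_add]
      have hs1 : Real.sqrt (-d-y) ≠ 0 := (Real.sqrt_pos.mpr h1).ne'
      have hs2 : Real.sqrt (2*d) ≠ 0 := (Real.sqrt_pos.mpr (by linarith)).ne'
      field_simp
    calc Real.exp (-a * (x - y)) / Real.sqrt (x - y) *
        (Real.exp (-a * (2 * (k : ℝ) * d + z - y)) /
          Real.sqrt (2 * (k : ℝ) * d + z - y))
        = Real.exp (-a * (x - y) + -a * (2 * (k : ℝ) * d + z - y))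
            / (Real.sqrt (x-y) * Real.sqrt (2 * (k:ℝ) * d + z - y)) := by
          rw [div_mul_div_comm, ← Real.exp_add]
      _ ≤ Real.exp (-a * (x - y) + -a * (2 * (k : ℝ) * d + z - y))
            / (Real.sqrt (-d-y) * Real.sqrt (2*d)) := by
          gcongr
      _ = g y := by
          have harg : -a * (x - y) + -a * (2 * (k : ℝ) * d + z - y)
              = -a*(2*((k:ℝ)+1)*d + x + z) + -(2*a*(-d-y)) := by ring
          rw [harg, hgy]
  -- assemble
  have hstep : ∫ y in Set.Iic (-d),
      Real.exp (-a * (x - y)) / Real.sqrt (x - y) *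
        (Real.exp (-a * (2 * (k : ℝ) * d + z - y)) /
          Real.sqrt (2 * (k : ℝ) * d + z - y))
      ≤ C * ((1/(2*a)) ^ (1/2:ℝ) * Real.Gamma (1/2)) := by
    rw [← setIntegral_congr_set Iio_ae_eq_Iic, ← hgval]
    apply integral_mono_of_nonneg
    · filter_upwards with y
      positivity
    · exact hgI
    · exact (ae_restrict_iff' measurableSet_Iio).mpr (Filter.Eventually.of_forall hbound)
  refine hstep.trans_eq ?_
  rw [Real.Gamma_one_half_eq, hCdef, ← Real.sqrt_eq_rpow, one_div, Real.sqrt_inv,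
    show (4*a*d) = (2*a)*(2*d) from by ring, Real.sqrt_mul (by linarith)]
  have hs1 : Real.sqrt (2*a) ≠ 0 := (Real.sqrt_pos.mpr (by linarith)).ne'
  have hs2 : Real.sqrt (2*d) ≠ 0 := (Real.sqrt_pos.mpr (by linarith)).ne'
  field_simp
  rw [← Real.sqrt_mul (by norm_num), ← Real.sqrt_mul (by positivity)]
  congr 1
  ring
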